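/- arXiv:2309.08553 — 7 statements merged into one kernel-verified Lean document; each statement's English description precedes it below -/
import Mathlib

section
/- The interval [1,50] of integers can be partitioned into 6 Sidon sets, namely {4,6,14,28,29,33,40,46,49}, {2,5,11,18,22,23,37,45,47}, {3,7,8,24,30,32,39,42}, {1,13,15,26,31,34,35,41}, {9,12,19,21,27,43,44,48}, {10,16,17,20,25,36,38,50}. -/
def sidonCheck (l : List ℤ) : Prop :=
  ∀ a ∈ l, ∀ b ∈ l, ∀ c ∈ l, ∀ d ∈ l, a + b = c + d → (a = c ∧ b = d) ∨ (a = d ∧ b = c)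

instance (l : List ℤ) : Decidable (sidonCheck l) := by
  unfold sidonCheck; infer_instance

/-- A set of integers is a Sidon set if `a+b = c+d` with all four in `S`
implies `{a,b} = {c,d}`. -/
def IsSidon (S : Set ℤ) : Prop :=
  ∀ a ∈ S, ∀ b ∈ S, ∀ c ∈ S, ∀ d ∈ S, a + b = c + d → ({a, b} : Set ℤ) = {c, d}

lemma sidon_of_check (l : List ℤ) (h : sidonCheck l) : IsSidon {x | x ∈ l} := by
  intro a ha b hb c hc d hd hsum
  rcases h a ha b hb c hc d hd hsum with ⟨rfl, rfl⟩ | ⟨rfl, rfl⟩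
  · rfl
  · exact Set.pair_comm a b

lemma disj_of_lists (l1 l2 : List ℤ) (h : ∀ a ∈ l1, a ∉ l2) :
    Disjoint {x : ℤ | x ∈ l1} {x : ℤ | x ∈ l2} :=
  Set.disjoint_left.2 h

lemma eqset0 : ({4,6,14,28,29,33,40,46,49} : Set ℤ) = {x : ℤ | x ∈ ([4,6,14,28,29,33,40,46,49] : List ℤ)} := by
  ext x; simp

lemma eqset1 : ({2,5,11,18,22,23,37,45,47} : Set ℤ) = {x : ℤ | x ∈ ([2,5,11,18,22,23,37,45,47] : List ℤ)} := by
  ext x; simp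

lemma eqset2 : ({3,7,8,24,30,32,39,42} : Set ℤ) = {x : ℤ | x ∈ ([3,7,8,24,30,32,39,42] : List ℤ)} := by
  ext x; simp

lemma eqset3 : ({1,13,15,26,31,34,35,41} : Set ℤ) = {x : ℤ | x ∈ ([1,13,15,26,31,34,35,41] : List ℤ)} := by
  ext x; simp

lemma eqset4 : ({9,12,19,21,27,43,44,48} : Set ℤ) = {x : ℤ | x ∈ ([9,12,19,21,27,43,44,48] : List ℤ)} := by
  ext x; simp

lemma eqset5 : ({10,16,17,20,25,36,38,50} : Set ℤ) = {x : ℤ | x ∈ ([10,16,17,20,25,36,38,50] : List ℤ)} := by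
  ext x; simp

lemma sidon0 : IsSidon ({4,6,14,28,29,33,40,46,49} : Set ℤ) := by
  rw [eqset0]; exact sidon_of_check _ (by decide)

lemma sidon1 : IsSidon ({2,5,11,18,22,23,37,45,47} : Set ℤ) := by
  rw [eqset1]; exact sidon_of_check _ (by decide)

lemma sidon2 : IsSidon ({3,7,8,24,30,32,39,42} : Set ℤ) := by
  rw [eqset2]; exact sidon_of_check _ (by decide)

lemma sidon3 : IsSidon ({1,13,15,26,31,34,35,41} : Set ℤ) := by
  rw [eqset3]; exact sidon_of_check _ (by decide)

lemma sidon4 : IsSidon ({9,12,19,21,27,43,44,48} : Set ℤ) := by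
  rw [eqset4]; exact sidon_of_check _ (by decide)

lemma sidon5 : IsSidon ({10,16,17,20,25,36,38,50} : Set ℤ) := by
  rw [eqset5]; exact sidon_of_check _ (by decide)

lemma disj01 : Disjoint ({4,6,14,28,29,33,40,46,49} : Set ℤ) ({2,5,11,18,22,23,37,45,47} : Set ℤ) := by
  rw [eqset0, eqset1]; exact disj_of_lists _ _ (by decide)

lemma disj02 : Disjoint ({4,6,14,28,29,33,40,46,49} : Set ℤ) ({3,7,8,24,30,32,39,42} : Set ℤ) := by
  rw [eqset0, eqset2]; exact disj_of_lists _ _ (by decide)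

lemma disj03 : Disjoint ({4,6,14,28,29,33,40,46,49} : Set ℤ) ({1,13,15,26,31,34,35,41} : Set ℤ) := by
  rw [eqset0, eqset3]; exact disj_of_lists _ _ (by decide)

lemma disj04 : Disjoint ({4,6,14,28,29,33,40,46,49} : Set ℤ) ({9,12,19,21,27,43,44,48} : Set ℤ) := by
  rw [eqset0, eqset4]; exact disj_of_lists _ _ (by decide)

lemma disj05 : Disjoint ({4,6,14,28,29,33,40,46,49} : Set ℤ) ({10,16,17,20,25,36,38,50} : Set ℤ) := by
  rw [eqset0, eqset5]; exact disj_of_lists _ _ (by decide)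

lemma disj12 : Disjoint ({2,5,11,18,22,23,37,45,47} : Set ℤ) ({3,7,8,24,30,32,39,42} : Set ℤ) := by
  rw [eqset1, eqset2]; exact disj_of_lists _ _ (by decide)

lemma disj13 : Disjoint ({2,5,11,18,22,23,37,45,47} : Set ℤ) ({1,13,15,26,31,34,35,41} : Set ℤ) := by
  rw [eqset1, eqset3]; exact disj_of_lists _ _ (by decide)

lemma disj14 : Disjoint ({2,5,11,18,22,23,37,45,47} : Set ℤ) ({9,12,19,21,27,43,44,48} : Set ℤ) := by
  rw [eqset1, eqset4]; exact disj_of_lists _ _ (by decide)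

lemma disj15 : Disjoint ({2,5,11,18,22,23,37,45,47} : Set ℤ) ({10,16,17,20,25,36,38,50} : Set ℤ) := by
  rw [eqset1, eqset5]; exact disj_of_lists _ _ (by decide)

lemma disj23 : Disjoint ({3,7,8,24,30,32,39,42} : Set ℤ) ({1,13,15,26,31,34,35,41} : Set ℤ) := by
  rw [eqset2, eqset3]; exact disj_of_lists _ _ (by decide)

lemma disj24 : Disjoint ({3,7,8,24,30,32,39,42} : Set ℤ) ({9,12,19,21,27,43,44,48} : Set ℤ) := by
  rw [eqset2, eqset4]; exact disj_of_lists _ _ (by decide)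

lemma disj25 : Disjoint ({3,7,8,24,30,32,39,42} : Set ℤ) ({10,16,17,20,25,36,38,50} : Set ℤ) := by
  rw [eqset2, eqset5]; exact disj_of_lists _ _ (by decide)

lemma disj34 : Disjoint ({1,13,15,26,31,34,35,41} : Set ℤ) ({9,12,19,21,27,43,44,48} : Set ℤ) := by
  rw [eqset3, eqset4]; exact disj_of_lists _ _ (by decide)

lemma disj35 : Disjoint ({1,13,15,26,31,34,35,41} : Set ℤ) ({10,16,17,20,25,36,38,50} : Set ℤ) := by
  rw [eqset3, eqset5]; exact disj_of_lists _ _ (by decide)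

lemma disj45 : Disjoint ({9,12,19,21,27,43,44,48} : Set ℤ) ({10,16,17,20,25,36,38,50} : Set ℤ) := by
  rw [eqset4, eqset5]; exact disj_of_lists _ _ (by decide)

lemma sub0 : ({4,6,14,28,29,33,40,46,49} : Set ℤ) ⊆ Set.Icc 1 50 := by
  intro y hy
  simp only [Set.mem_insert_iff, Set.mem_singleton_iff] at hy
  rw [Set.mem_Icc]; omega

lemma sub1 : ({2,5,11,18,22,23,37,45,47} : Set ℤ) ⊆ Set.Icc 1 50 := by
  intro y hy
  simp only [Set.mem_insert_iff, Set.mem_singleton_iff] at hy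
  rw [Set.mem_Icc]; omega

lemma sub2 : ({3,7,8,24,30,32,39,42} : Set ℤ) ⊆ Set.Icc 1 50 := by
  intro y hy
  simp only [Set.mem_insert_iff, Set.mem_singleton_iff] at hy
  rw [Set.mem_Icc]; omega

lemma sub3 : ({1,13,15,26,31,34,35,41} : Set ℤ) ⊆ Set.Icc 1 50 := by
  intro y hy
  simp only [Set.mem_insert_iff, Set.mem_singleton_iff] at hy
  rw [Set.mem_Icc]; omega

lemma sub4 : ({9,12,19,21,27,43,44,48} : Set ℤ) ⊆ Set.Icc 1 50 := by
  intro y hy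
  simp only [Set.mem_insert_iff, Set.mem_singleton_iff] at hy
  rw [Set.mem_Icc]; omega

lemma sub5 : ({10,16,17,20,25,36,38,50} : Set ℤ) ⊆ Set.Icc 1 50 := by
  intro y hy
  simp only [Set.mem_insert_iff, Set.mem_singleton_iff] at hy
  rw [Set.mem_Icc]; omega

set_option maxHeartbeats 2000000 in
theorem partition_50_into_6_sidon :
    (IsSidon ({4,6,14,28,29,33,40,46,49} : Set ℤ)) ∧
    (IsSidon ({2,5,11,18,22,23,37,45,47} : Set ℤ)) ∧
    (IsSidon ({3,7,8,24,30,32,39,42} : Set ℤ)) ∧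
    (IsSidon ({1,13,15,26,31,34,35,41} : Set ℤ)) ∧
    (IsSidon ({9,12,19,21,27,43,44,48} : Set ℤ)) ∧
    (IsSidon ({10,16,17,20,25,36,38,50} : Set ℤ)) ∧
    (∀ i j : Fin 6, i ≠ j → Disjoint
      (![({4,6,14,28,29,33,40,46,49} : Set ℤ),
         {2,5,11,18,22,23,37,45,47},
         {3,7,8,24,30,32,39,42},
         {1,13,15,26,31,34,35,41},
         {9,12,19,21,27,43,44,48},
         {10,16,17,20,25,36,38,50}] i)
      (![({4,6,14,28,29,33,40,46,49} : Set ℤ),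
         {2,5,11,18,22,23,37,45,47},
         {3,7,8,24,30,32,39,42},
         {1,13,15,26,31,34,35,41},
         {9,12,19,21,27,43,44,48},
         {10,16,17,20,25,36,38,50}] j)) ∧
    ((⋃ i, ![({4,6,14,28,29,33,40,46,49} : Set ℤ),
         {2,5,11,18,22,23,37,45,47},
         {3,7,8,24,30,32,39,42},
         {1,13,15,26,31,34,35,41},
         {9,12,19,21,27,43,44,48},
         {10,16,17,20,25,36,38,50}] i) = Set.Icc (1 : ℤ) 50) := by
  refine ⟨sidon0, sidon1, sidon2, sidon3, sidon4, sidon5, ?_, ?_⟩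
  · intro i j hij
    fin_cases i <;> fin_cases j <;> first | exact absurd rfl hij | skip
    exacts [disj01, disj02, disj03, disj04, disj05, disj01.symm, disj12, disj13, disj14, disj15, disj02.symm, disj12.symm, disj23, disj24, disj25, disj03.symm, disj13.symm, disj23.symm, disj34, disj35, disj04.symm, disj14.symm, disj24.symm, disj34.symm, disj45, disj05.symm, disj15.symm, disj25.symm, disj35.symm, disj45.symm]
  · ext x
    simp only [Set.mem_iUnion, Set.mem_Icc]
    constructor
    · rintro ⟨i, hi⟩
      fin_cases i
      exacts [Set.mem_Icc.1 (sub0 hi), Set.mem_Icc.1 (sub1 hi), Set.mem_Icc.1 (sub2 hi),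
        Set.mem_Icc.1 (sub3 hi), Set.mem_Icc.1 (sub4 hi), Set.mem_Icc.1 (sub5 hi)]
    · intro hx
      have h : x = 1 ∨ x = 2 ∨ x = 3 ∨ x = 4 ∨ x = 5 ∨ x = 6 ∨ x = 7 ∨ x = 8 ∨ x = 9 ∨ x = 10 ∨ x = 11 ∨ x = 12 ∨ x = 13 ∨ x = 14 ∨ x = 15 ∨ x = 16 ∨ x = 17 ∨ x = 18 ∨ x = 19 ∨ x = 20 ∨ x = 21 ∨ x = 22 ∨ x = 23 ∨ x = 24 ∨ x = 25 ∨ x = 26 ∨ x = 27 ∨ x = 28 ∨ x = 29 ∨ x = 30 ∨ x = 31 ∨ x = 32 ∨ x = 33 ∨ x = 34 ∨ x = 35 ∨ x = 36 ∨ x = 37 ∨ x = 38 ∨ x = 39 ∨ x = 40 ∨ x = 41 ∨ x = 42 ∨ x = 43 ∨ x = 44 ∨ x = 45 ∨ x = 46 ∨ x = 47 ∨ x = 48 ∨ x = 49 ∨ x = 50 := by omega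
      rcases h with rfl|rfl|rfl|rfl|rfl|rfl|rfl|rfl|rfl|rfl|rfl|rfl|rfl|rfl|rfl|rfl|rfl|rfl|rfl|rfl|rfl|rfl|rfl|rfl|rfl|rfl|rfl|rfl|rfl|rfl|rfl|rfl|rfl|rfl|rfl|rfl|rfl|rfl|rfl|rfl|rfl|rfl|rfl|rfl|rfl|rfl|rfl|rfl|rfl|rfl
      exacts [⟨3, show (1:ℤ) ∈ ({1,13,15,26,31,34,35,41} : Set ℤ) by norm_num⟩, ⟨1, show (2:ℤ) ∈ ({2,5,11,18,22,23,37,45,47} : Set ℤ) by norm_num⟩, ⟨2, show (3:ℤ) ∈ ({3,7,8,24,30,32,39,42} : Set ℤ) by norm_num⟩, ⟨0, show (4:ℤ) ∈ ({4,6,14,28,29,33,40,46,49} : Set ℤ) by norm_num⟩, ⟨1, show (5:ℤ) ∈ ({2,5,11,18,22,23,37,45,47} : Set ℤ) by norm_num⟩, ⟨0, show (6:ℤ) ∈ ({4,6,14,28,29,33,40,46,49} : Set ℤ) by norm_num⟩, ⟨2, show (7:ℤ) ∈ ({3,7,8,24,30,32,39,42} : Set ℤ) by norm_num⟩, ⟨2,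 show (8:ℤ) ∈ ({3,7,8,24,30,32,39,42} : Set ℤ) by norm_num⟩, ⟨4, show (9:ℤ) ∈ ({9,12,19,21,27,43,44,48} : Set ℤ) by norm_num⟩, ⟨5, show (10:ℤ) ∈ ({10,16,17,20,25,36,38,50} : Set ℤ) by norm_num⟩, ⟨1, show (11:ℤ) ∈ ({2,5,11,18,22,23,37,45,47} : Set ℤ) by norm_num⟩, ⟨4, show (12:ℤ) ∈ ({9,12,19,21,27,43,44,48} : Set ℤ) by norm_num⟩, ⟨3, show (13:ℤ) ∈ ({1,13,15,26,31,34,35,41} : Set ℤ) by norm_num⟩, ⟨0, show (14:ℤ) ∈ ({4,6,14,28,29,33,40,46,49} : Set ℤ) by norm_num⟩, ⟨3, show (15:ℤ) ∈ ({1,13,15,26,31,34,35,41} : Set ℤ) by norm_num⟩, ⟨5, show (16:ℤ) ∈ ({10,16,17,20,25,36,38,50} : Set ℤ) by norm_num⟩, ⟨5, show (17:ℤ) ∈ ({10,16,17,20,25,36,38,50} : Set ℤ) by norm_num⟩, ⟨1, show (18:ℤ) ∈ ({2,5,11,18,22,23,37,45,47} : Set ℤ) by norm_num⟩, ⟨4,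 show (19:ℤ) ∈ ({9,12,19,21,27,43,44,48} : Set ℤ) by norm_num⟩, ⟨5, show (20:ℤ) ∈ ({10,16,17,20,25,36,38,50} : Set ℤ) by norm_num⟩, ⟨4, show (21:ℤ) ∈ ({9,12,19,21,27,43,44,48} : Set ℤ) by norm_num⟩, ⟨1, show (22:ℤ) ∈ ({2,5,11,18,22,23,37,45,47} : Set ℤ) by norm_num⟩, ⟨1, show (23:ℤ) ∈ ({2,5,11,18,22,23,37,45,47} : Set ℤ) by norm_num⟩, ⟨2, show (24:ℤ) ∈ ({3,7,8,24,30,32,39,42} : Set ℤ) by norm_num⟩, ⟨5, show (25:ℤ) ∈ ({10,16,17,20,25,36,38,50} : Set ℤ) by norm_num⟩, ⟨3, show (26:ℤ) ∈ ({1,13,15,26,31,34,35,41} : Set ℤ) by norm_num⟩, ⟨4, show (27:ℤ) ∈ ({9,12,19,21,27,43,44,48} : Set ℤ) by norm_num⟩, ⟨0, show (28:ℤ) ∈ ({4,6,14,28,29,33,40,46,49} : Set ℤ) by norm_num⟩, ⟨0, show (29:ℤ) ∈ ({4,6,14,28,29,33,40,46,49} : Set ℤ) by norm_num⟩, ⟨2,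 show (30:ℤ) ∈ ({3,7,8,24,30,32,39,42} : Set ℤ) by norm_num⟩, ⟨3, show (31:ℤ) ∈ ({1,13,15,26,31,34,35,41} : Set ℤ) by norm_num⟩, ⟨2, show (32:ℤ) ∈ ({3,7,8,24,30,32,39,42} : Set ℤ) by norm_num⟩, ⟨0, show (33:ℤ) ∈ ({4,6,14,28,29,33,40,46,49} : Set ℤ) by norm_num⟩, ⟨3, show (34:ℤ) ∈ ({1,13,15,26,31,34,35,41} : Set ℤ) by norm_num⟩, ⟨3, show (35:ℤ) ∈ ({1,13,15,26,31,34,35,41} : Set ℤ) by norm_num⟩, ⟨5, show (36:ℤ) ∈ ({10,16,17,20,25,36,38,50} : Set ℤ) by norm_num⟩, ⟨1, show (37:ℤ) ∈ ({2,5,11,18,22,23,37,45,47} : Set ℤ) by norm_num⟩, ⟨5, show (38:ℤ) ∈ ({10,16,17,20,25,36,38,50} : Set ℤ) by norm_num⟩, ⟨2, show (39:ℤ) ∈ ({3,7,8,24,30,32,39,42} : Set ℤ) by norm_num⟩, ⟨0, show (40:ℤ) ∈ ({4,6,14,28,29,33,40,46,49} : Set ℤ) by norm_num⟩, ⟨3,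 show (41:ℤ) ∈ ({1,13,15,26,31,34,35,41} : Set ℤ) by norm_num⟩, ⟨2, show (42:ℤ) ∈ ({3,7,8,24,30,32,39,42} : Set ℤ) by norm_num⟩, ⟨4, show (43:ℤ) ∈ ({9,12,19,21,27,43,44,48} : Set ℤ) by norm_num⟩, ⟨4, show (44:ℤ) ∈ ({9,12,19,21,27,43,44,48} : Set ℤ) by norm_num⟩, ⟨1, show (45:ℤ) ∈ ({2,5,11,18,22,23,37,45,47} : Set ℤ) by norm_num⟩, ⟨0, show (46:ℤ) ∈ ({4,6,14,28,29,33,40,46,49} : Set ℤ) by norm_num⟩, ⟨1, show (47:ℤ) ∈ ({2,5,11,18,22,23,37,45,47} : Set ℤ) by norm_num⟩, ⟨4, show (48:ℤ) ∈ ({9,12,19,21,27,43,44,48} : Set ℤ) by norm_num⟩, ⟨0, show (49:ℤ) ∈ ({4,6,14,28,29,33,40,46,49} : Set ℤ) by norm_num⟩, ⟨5, show (50:ℤ) ∈ ({10,16,17,20,25,36,38,50} : Set ℤ) by norm_num⟩]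
end

section
/- The interval [1,65] can be partitioned into 7 Sidon sets, namely {1,3,15,22,30,33,46,50,55,56}, {2,9,17,21,26,27,47,49,60,63}, {4,7,13,23,24,28,36,54,61}, {5,12,14,20,34,44,45,57,62}, {6,10,16,29,38,41,43,58,59}, {8,25,31,32,35,40,51,53,65}, {11,18,19,37,39,42,48,52,64}. -/
def sidonM : Fin 7 → Set ℤ :=
  ![({1,3,15,22,30,33,46,50,55,56} : Set ℤ),
    {2,9,17,21,26,27,47,49,60,63},
    {4,7,13,23,24,28,36,54,61},
    {5,12,14,20,34,44,45,57,62},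
    {6,10,16,29,38,41,43,58,59},
    {8,25,31,32,35,40,51,53,65},
    {11,18,19,37,39,42,48,52,64}]

def sidonL : Fin 7 → List ℤ :=
  ![[1,3,15,22,30,33,46,50,55,56],
    [2,9,17,21,26,27,47,49,60,63],
    [4,7,13,23,24,28,36,54,61],
    [5,12,14,20,34,44,45,57,62],
    [6,10,16,29,38,41,43,58,59],
    [8,25,31,32,35,40,51,53,65],
    [11,18,19,37,39,42,48,52,64]]

lemma pair_eq_of {a b c d : ℤ} (h : (a = c ∧ b = d) ∨ (a = d ∧ b = c)) :
    ({a, b} : Set ℤ) = {c, d} := by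
  rcases h with ⟨rfl, rfl⟩ | ⟨rfl, rfl⟩
  · rfl
  · exact Set.pair_comm a b

lemma sidon_of_list (l : List ℤ)
    (h : ∀ a ∈ l, ∀ b ∈ l, ∀ c ∈ l, ∀ d ∈ l, a + b = c + d →
      (a = c ∧ b = d) ∨ (a = d ∧ b = c)) :
    IsSidon {x | x ∈ l} :=
  fun a ha b hb c hc d hd e => pair_eq_of (h a ha b hb c hc d hd e)

lemma sidonM_eq : ∀ i, sidonM i = {x | x ∈ sidonL i} := by
  have h0 : sidonM 0 = {x | x ∈ sidonL 0} := by
    rw [show sidonM 0 = ({1,3,15,22,30,33,46,50,55,56} : Set ℤ) from rfl,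
        show sidonL 0 = ([1,3,15,22,30,33,46,50,55,56] : List ℤ) from rfl]
    ext x; simp
  have h1 : sidonM 1 = {x | x ∈ sidonL 1} := by
    rw [show sidonM 1 = ({2,9,17,21,26,27,47,49,60,63} : Set ℤ) from rfl,
        show sidonL 1 = ([2,9,17,21,26,27,47,49,60,63] : List ℤ) from rfl]
    ext x; simp
  have h2 : sidonM 2 = {x | x ∈ sidonL 2} := by
    rw [show sidonM 2 = ({4,7,13,23,24,28,36,54,61} : Set ℤ) from rfl,
        show sidonL 2 = ([4,7,13,23,24,28,36,54,61] : List ℤ) from rfl]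
    ext x; simp
  have h3 : sidonM 3 = {x | x ∈ sidonL 3} := by
    rw [show sidonM 3 = ({5,12,14,20,34,44,45,57,62} : Set ℤ) from rfl,
        show sidonL 3 = ([5,12,14,20,34,44,45,57,62] : List ℤ) from rfl]
    ext x; simp
  have h4 : sidonM 4 = {x | x ∈ sidonL 4} := by
    rw [show sidonM 4 = ({6,10,16,29,38,41,43,58,59} : Set ℤ) from rfl,
        show sidonL 4 = ([6,10,16,29,38,41,43,58,59] : List ℤ) from rfl]
    ext x; simp
  have h5 : sidonM 5 = {x | x ∈ sidonL 5} := by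
    rw [show sidonM 5 = ({8,25,31,32,35,40,51,53,65} : Set ℤ) from rfl,
        show sidonL 5 = ([8,25,31,32,35,40,51,53,65] : List ℤ) from rfl]
    ext x; simp
  have h6 : sidonM 6 = {x | x ∈ sidonL 6} := by
    rw [show sidonM 6 = ({11,18,19,37,39,42,48,52,64} : Set ℤ) from rfl,
        show sidonL 6 = ([11,18,19,37,39,42,48,52,64] : List ℤ) from rfl]
    ext x; simp
  intro i
  fin_cases i
  · exact h0
  · exact h1
  · exact h2
  · exact h3
  · exact h4
  · exact h5
  · exact h6

lemma sidonL_disj : ∀ i j : Fin 7, i ≠ j → ∀ x ∈ sidonL i, x ∉ sidonL j := by decide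

lemma sidonM_disj : ∀ i j : Fin 7, i ≠ j → Disjoint (sidonM i) (sidonM j) := by
  intro i j hij
  rw [sidonM_eq i, sidonM_eq j]
  exact Set.disjoint_left.2 (sidonL_disj i j hij)

lemma sidonL_mem_bounds : ∀ i : Fin 7, ∀ x ∈ sidonL i, 1 ≤ x ∧ x ≤ 65 := by decide

lemma sidonL_cover : ∀ x : ℤ, 1 ≤ x → x ≤ 65 → ∃ i : Fin 7, x ∈ sidonL i := by
  intro x h1 h2
  interval_cases x <;> decide

lemma sidonM_union : (⋃ i, sidonM i) = Set.Icc (1 : ℤ) 65 := by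
  ext x
  simp only [Set.mem_iUnion, Set.mem_Icc]
  constructor
  · rintro ⟨i, hi⟩
    rw [sidonM_eq i] at hi
    exact sidonL_mem_bounds i x hi
  · intro hx
    obtain ⟨i, hi⟩ := sidonL_cover x hx.1 hx.2
    exact ⟨i, by rw [sidonM_eq i]; exact hi⟩

set_option maxHeartbeats 1000000 in
theorem partition_65_into_7_sidon :
    (IsSidon ({1,3,15,22,30,33,46,50,55,56} : Set ℤ)) ∧
    (IsSidon ({2,9,17,21,26,27,47,49,60,63} : Set ℤ)) ∧
    (IsSidon ({4,7,13,23,24,28,36,54,61} : Set ℤ)) ∧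
    (IsSidon ({5,12,14,20,34,44,45,57,62} : Set ℤ)) ∧
    (IsSidon ({6,10,16,29,38,41,43,58,59} : Set ℤ)) ∧
    (IsSidon ({8,25,31,32,35,40,51,53,65} : Set ℤ)) ∧
    (IsSidon ({11,18,19,37,39,42,48,52,64} : Set ℤ)) ∧
    (∀ i j : Fin 7, i ≠ j → Disjoint
      (![({1,3,15,22,30,33,46,50,55,56} : Set ℤ),
         {2,9,17,21,26,27,47,49,60,63},
         {4,7,13,23,24,28,36,54,61},
         {5,12,14,20,34,44,45,57,62},
         {6,10,16,29,38,41,43,58,59},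
         {8,25,31,32,35,40,51,53,65},
         {11,18,19,37,39,42,48,52,64}] i)
      (![({1,3,15,22,30,33,46,50,55,56} : Set ℤ),
         {2,9,17,21,26,27,47,49,60,63},
         {4,7,13,23,24,28,36,54,61},
         {5,12,14,20,34,44,45,57,62},
         {6,10,16,29,38,41,43,58,59},
         {8,25,31,32,35,40,51,53,65},
         {11,18,19,37,39,42,48,52,64}] j)) ∧
    ((⋃ i, ![({1,3,15,22,30,33,46,50,55,56} : Set ℤ),
         {2,9,17,21,26,27,47,49,60,63},
         {4,7,13,23,24,28,36,54,61},
         {5,12,14,20,34,44,45,57,62},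
         {6,10,16,29,38,41,43,58,59},
         {8,25,31,32,35,40,51,53,65},
         {11,18,19,37,39,42,48,52,64}] i) = Set.Icc (1 : ℤ) 65) := by
  refine ⟨?_, ?_, ?_, ?_, ?_, ?_, ?_, ?_, ?_⟩
  · have e := sidonM_eq 0
    rw [show sidonM 0 = ({1,3,15,22,30,33,46,50,55,56} : Set ℤ) from rfl] at e
    rw [e]; exact sidon_of_list _ (by decide)
  · have e := sidonM_eq 1
    rw [show sidonM 1 = ({2,9,17,21,26,27,47,49,60,63} : Set ℤ) from rfl] at e
    rw [e]; exact sidon_of_list _ (by decide)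
  · have e := sidonM_eq 2
    rw [show sidonM 2 = ({4,7,13,23,24,28,36,54,61} : Set ℤ) from rfl] at e
    rw [e]; exact sidon_of_list _ (by decide)
  · have e := sidonM_eq 3
    rw [show sidonM 3 = ({5,12,14,20,34,44,45,57,62} : Set ℤ) from rfl] at e
    rw [e]; exact sidon_of_list _ (by decide)
  · have e := sidonM_eq 4
    rw [show sidonM 4 = ({6,10,16,29,38,41,43,58,59} : Set ℤ) from rfl] at e
    rw [e]; exact sidon_of_list _ (by decide)
  · have e := sidonM_eq 5
    rw [show sidonM 5 = ({8,25,31,32,35,40,51,53,65} : Set ℤ) from rfl] at e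
    rw [e]; exact sidon_of_list _ (by decide)
  · have e := sidonM_eq 6
    rw [show sidonM 6 = ({11,18,19,37,39,42,48,52,64} : Set ℤ) from rfl] at e
    rw [e]; exact sidon_of_list _ (by decide)
  · exact sidonM_disj
  · exact sidonM_union
end

section
/- Every Sidon set contained in [1,51] has at most 9 elements, i.e., F₂(51) ≤ 9. -/
/- ### A verified search: no 10-element Sidon set (Golomb ruler) fits in [0,50]. -/

/-- bitmask of the differences `x - m` for `m ∈ ms`. -/
def ndiffs (x : ℕ) (ms : List ℕ) : ℕ :=
  List.rec 0 (fun m _ ih => (1 <<< (x - m)) ||| ih) ms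

/-- check that no difference `x - m` is already used (bit set in `ds`). -/
def okc (x : ℕ) (ds : ℕ) (ms : List ℕ) : Bool :=
  List.rec true (fun m _ ih => (((ds >>> (x - m)) &&& 1) == 0) && ih) ms

/-- `sumSel ds fuel c t acc`: `acc` plus the sum of the `c` smallest integers `> t`
whose bit is unset in `ds` (fuel-limited, under-approximates if fuel runs out). -/
def sumSel (ds : ℕ) : ℕ → ℕ → ℕ → ℕ → ℕ :=
  Nat.rec (motive := fun _ => ℕ → ℕ → ℕ → ℕ) (fun _ _ acc => acc)
    (fun _ ih c t acc =>
      Nat.rec (motive := fun _ => ℕ) acc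
        (fun c' _ =>
          cond (((ds >>> (t + 1)) &&& 1) == 0)
            (ih c' (t + 1) (acc + (t + 1)))
            (ih (c' + 1) (t + 1) acc)) c)

/-- does `b` hold for some of `n` consecutive values starting at `lo`? -/
def anyIn (b : ℕ → Bool) : ℕ → ℕ → Bool :=
  Nat.rec (motive := fun _ => ℕ → Bool) (fun _ => false)
    (fun _ ih x => b x || ih (x + 1))

/-- Depth-first search: can `k` more marks be added (all `≤ 50`, starting at `lo`,
marks so far `ms`, used differences `ds`) keeping all pairwise differences distinct?
(Completeness of the pruning is proved below; soundness is not needed.) -/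
def srchG : ℕ → List ℕ → ℕ → ℕ → Bool :=
  Nat.rec (motive := fun _ => List ℕ → ℕ → ℕ → Bool) (fun _ _ _ => true)
    (fun k ih ms ds lo =>
      anyIn (fun x => okc x ds ms && ih (x :: ms) (ds ||| ndiffs x ms) (x + 1))
        (51 - sumSel ds 128 k 0 0 - lo) lo)

/-- the search after placing marks `0` and `x`. -/
def top (x : ℕ) : Bool := srchG 8 [x, 0] (ndiffs x [0]) (x + 1)

/- ### rfl-equation lemmas -/

theorem ndiffs_nil (x : ℕ) : ndiffs x [] = 0 := rfl
theorem ndiffs_cons (x m : ℕ) (ms : List ℕ) :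
    ndiffs x (m :: ms) = (1 <<< (x - m)) ||| ndiffs x ms := rfl
theorem okc_nil (x ds : ℕ) : okc x ds [] = true := rfl
theorem okc_cons (x ds m : ℕ) (ms : List ℕ) :
    okc x ds (m :: ms) = ((((ds >>> (x - m)) &&& 1) == 0) && okc x ds ms) := rfl
theorem sumSel_zero (ds c t acc : ℕ) : sumSel ds 0 c t acc = acc := rfl
theorem sumSel_succ_zero (ds f t acc : ℕ) : sumSel ds (f + 1) 0 t acc = acc := rfl
theorem sumSel_succ_succ (ds f c t acc : ℕ) :
    sumSel ds (f + 1) (c + 1) t acc =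
      cond (((ds >>> (t + 1)) &&& 1) == 0)
        (sumSel ds f c (t + 1) (acc + (t + 1)))
        (sumSel ds f (c + 1) (t + 1) acc) := rfl
theorem anyIn_zero (b : ℕ → Bool) (lo : ℕ) : anyIn b 0 lo = false := rfl
theorem anyIn_succ (b : ℕ → Bool) (n lo : ℕ) :
    anyIn b (n + 1) lo = (b lo || anyIn b n (lo + 1)) := rfl
theorem srchG_zero (ms : List ℕ) (ds lo : ℕ) : srchG 0 ms ds lo = true := rfl
theorem srchG_succ (k : ℕ) (ms : List ℕ) (ds lo : ℕ) :
    srchG (k + 1) ms ds lo =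
      anyIn (fun x => okc x ds ms && srchG k (x :: ms) (ds ||| ndiffs x ms) (x + 1))
        (51 - sumSel ds 128 k 0 0 - lo) lo := rfl

/- ### bit-level facts -/

/-- `d`-th bit of `ds` is set. -/
def bitset (ds d : ℕ) : Prop := ds / 2 ^ d % 2 = 1

theorem bitset_iff {ds d : ℕ} : bitset ds d ↔ ds.testBit d = true := by
  rw [Nat.testBit_eq_decide_div_mod_eq]; simp [bitset]

theorem shift_and_eq (ds e : ℕ) : (ds >>> e) &&& 1 = ds / 2 ^ e % 2 := by
  rw [Nat.and_one_is_mod, Nat.shiftRight_eq_div_pow]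

theorem beq_true_of_not_bitset {ds e : ℕ} (h : ¬ bitset ds e) :
    ((((ds >>> e) &&& 1) == 0) : Bool) = true := by
  rw [shift_and_eq]
  simp only [beq_iff_eq]
  unfold bitset at h
  omega

theorem beq_false_of_bitset {ds e : ℕ} (h : bitset ds e) :
    ((((ds >>> e) &&& 1) == 0) : Bool) = false := by
  rw [shift_and_eq]
  simp only [beq_eq_false_iff_ne, ne_eq]
  unfold bitset at h
  omega

theorem bitset_or {a b d : ℕ} (h : bitset (a ||| b) d) : bitset a d ∨ bitset b d := by
  rw [bitset_iff] at h
  rw [bitset_iff, bitset_iff]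
  rw [Nat.testBit_lor] at h
  exact Bool.or_eq_true_iff.mp h

theorem bitset_shiftLeft_one {n d : ℕ} (h : bitset (1 <<< n) d) : d = n := by
  rw [bitset_iff, Nat.one_shiftLeft, Nat.testBit_two_pow] at h
  exact (of_decide_eq_true h).symm

theorem not_bitset_zero (d : ℕ) : ¬ bitset 0 d := by simp [bitset]

theorem ndiffs_bitset {x d : ℕ} :
    ∀ ms : List ℕ, bitset (ndiffs x ms) d → ∃ m ∈ ms, d = x - m := by
  intro ms
  induction ms with
  | nil => intro h; rw [ndiffs_nil] at h; exact absurd h (not_bitset_zero d)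
  | cons m ms ih =>
    intro h
    rw [ndiffs_cons] at h
    rcases bitset_or h with h1 | h2
    · exact ⟨m, List.mem_cons_self, bitset_shiftLeft_one h1⟩
    · obtain ⟨m', hm', he⟩ := ih h2
      exact ⟨m', List.mem_cons_of_mem _ hm', he⟩

theorem okc_true {x ds : ℕ} :
    ∀ ms : List ℕ, (∀ m ∈ ms, ¬ bitset ds (x - m)) → okc x ds ms = true := by
  intro ms
  induction ms with
  | nil => intro _; rfl
  | cons m ms ih =>
    intro h
    rw [okc_cons, beq_true_of_not_bitset (h m (List.mem_cons_self)),
      ih (fun m' hm' => h m' (List.mem_cons_of_mem _ hm'))]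
    rfl

theorem anyIn_true {b : ℕ → Bool} {x : ℕ} (hbx : b x = true) :
    ∀ n lo : ℕ, lo ≤ x → x < lo + n → anyIn b n lo = true := by
  intro n
  induction n with
  | zero => intro lo h1 h2; omega
  | succ n ih =>
    intro lo h1 h2
    rw [anyIn_succ]
    rcases eq_or_lt_of_le h1 with rfl | hlt
    · rw [hbx]; rfl
    · rw [ih (lo + 1) hlt (by omega)]
      exact Bool.or_true _

/- ### the selection lower bound -/

theorem sel_le (ds : ℕ) : ∀ (fuel c t acc : ℕ) (T : Finset ℕ),
    (∀ y ∈ T, t < y ∧ ¬ bitset ds y) → c ≤ T.card →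
    sumSel ds fuel c t acc ≤ acc + T.sum id := by
  intro fuel
  induction fuel with
  | zero =>
    intro c t acc T _ _
    rw [sumSel_zero]; exact Nat.le_add_right _ _
  | succ f ih =>
    intro c t acc T hT hc
    match c with
    | 0 => rw [sumSel_succ_zero]; exact Nat.le_add_right _ _
    | c' + 1 =>
      have hne : T.Nonempty := Finset.card_pos.mp (by omega)
      have hmT : T.min' hne ∈ T := Finset.min'_mem T hne
      set m := T.min' hne with hm
      have hmt : t < m := (hT m hmT).1
      have hsplit : (T.erase m).sum id + m = T.sum id := by
        have := Finset.sum_erase_add T id hmT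
        simpa using this
      rw [sumSel_succ_succ]
      by_cases hb : bitset ds (t + 1)
      · rw [beq_false_of_bitset hb, cond_false]
        refine ih (c' + 1) (t + 1) acc T (fun y hy => ?_) hc
        have h1 := hT y hy
        have : y ≠ t + 1 := fun he => h1.2 (he ▸ hb)
        exact ⟨by omega, h1.2⟩
      · rw [beq_true_of_not_bitset hb, cond_true]
        have hcard : c' ≤ (T.erase m).card := by
          rw [Finset.card_erase_of_mem hmT]; omega
        have hbnds : ∀ y ∈ T.erase m, t + 1 < y ∧ ¬ bitset ds y := by
          intro y hy
          have hyT : y ∈ T := Finset.mem_of_mem_erase hy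
          have hym : y ≠ m := Finset.ne_of_mem_erase hy
          have hmy : m ≤ y := Finset.min'_le T y hyT
          exact ⟨by omega, (hT y hyT).2⟩
        have h2 := ih c' (t + 1) (acc + (t + 1)) (T.erase m) hbnds hcard
        omega

/- ### gaps of an increasing list -/

def gaps : List ℕ → List ℕ
  | a :: b :: t => (b - a) :: gaps (b :: t)
  | _ => []

theorem gaps_length : ∀ l : List ℕ, (gaps l).length = l.length - 1
  | [] => rfl
  | [_] => rfl
  | a :: b :: t => by
    show (gaps (b :: t)).length + 1 = _
    rw [gaps_length (b :: t)]
    simp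

theorem gaps_sum : ∀ (a : ℕ) (t : List ℕ), (a :: t).Pairwise (· < ·) →
    ∃ z ∈ a :: t, z = a + (gaps (a :: t)).sum := by
  intro a t
  induction t generalizing a with
  | nil => intro _; exact ⟨a, List.mem_cons_self, by simp [gaps]⟩
  | cons b t' ih =>
    intro hp
    have hab : a < b := (List.pairwise_cons.mp hp).1 b (List.mem_cons_self)
    obtain ⟨z, hz, he⟩ := ih b (List.pairwise_cons.mp hp).2
    refine ⟨z, List.mem_cons_of_mem _ hz, ?_⟩
    show z = a + ((b - a) :: gaps (b :: t')).sum
    rw [List.sum_cons]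
    omega

theorem gaps_rep : ∀ l : List ℕ, l.Pairwise (· < ·) →
    ∀ d ∈ gaps l, ∃ p q, p ∈ l ∧ q ∈ l ∧ p < q ∧ d = q - p
  | [] => by intro _ d hd; simp [gaps] at hd
  | [_] => by intro _ d hd; simp [gaps] at hd
  | a :: b :: t => by
    intro hp d hd
    rcases List.mem_cons.mp hd with rfl | hd'
    · exact ⟨a, b, List.mem_cons_self,
        List.mem_cons_of_mem _ (List.mem_cons_self),
        (List.pairwise_cons.mp hp).1 b (List.mem_cons_self), rfl⟩
    · obtain ⟨p, q, hpm, hqm, hpq, he⟩ :=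
        gaps_rep (b :: t) (List.pairwise_cons.mp hp).2 d hd'
      exact ⟨p, q, List.mem_cons_of_mem _ hpm, List.mem_cons_of_mem _ hqm, hpq, he⟩

theorem gaps_nodup (P : ℕ → Prop)
    (key : ∀ a b c d : ℕ, P a → P b → P c → P d → b < a → d < c →
      a - b = c - d → a = c ∧ b = d) :
    ∀ l : List ℕ, l.Pairwise (· < ·) → (∀ y ∈ l, P y) → (gaps l).Nodup := by
  intro l
  induction l with
  | nil => intro _ _; simp [gaps]
  | cons a t ih =>
    match t with
    | [] => intro _ _; simp [gaps]
    | b :: t' =>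
      intro hp hP
      have hp' := (List.pairwise_cons.mp hp).2
      have hab : a < b := (List.pairwise_cons.mp hp).1 b (List.mem_cons_self)
      have hrest : (gaps (b :: t')).Nodup :=
        ih hp' (fun y hy => hP y (List.mem_cons_of_mem _ hy))
      show ((b - a) :: gaps (b :: t')).Nodup
      rw [List.nodup_cons]
      refine ⟨fun hmem => ?_, hrest⟩
      obtain ⟨p, q, hpm, hqm, hpq, he⟩ := gaps_rep (b :: t') hp' (b - a) hmem
      have hPb := hP b (List.mem_cons_of_mem _ (List.mem_cons_self))
      have hPa := hP a (List.mem_cons_self)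
      have hPp := hP p (List.mem_cons_of_mem _ hpm)
      have hPq := hP q (List.mem_cons_of_mem _ hqm)
      have hkey := key q p b a hPq hPp hPb hPa hpq hab he.symm
      -- q = b and p = a, but p ∈ b :: t' forces b ≤ p, contradicting a < b
      have hbp : b ≤ p := by
        rcases List.mem_cons.mp hpm with rfl | hp2
        · exact le_refl _
        · exact le_of_lt ((List.pairwise_cons.mp hp').1 p hp2)
      omega

/- ### completeness of the search -/

theorem complete (P : ℕ → Prop) (hP50 : ∀ n, P n → n ≤ 50)
    (key : ∀ a b c d : ℕ, P a → P b → P c → P d → b < a → d < c →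
      a - b = c - d → a = c ∧ b = d) :
    ∀ (k : ℕ) (xs ms : List ℕ) (ds lo : ℕ),
      xs.length = k → xs.Pairwise (· < ·) →
      (∀ y ∈ xs, P y ∧ lo ≤ y) →
      (∀ m ∈ ms, P m ∧ m < lo) →
      (∀ d, bitset ds d → ∃ a b : ℕ, P a ∧ P b ∧ b < a ∧ a < lo ∧ a - b = d) →
      srchG k ms ds lo = true := by
  intro k
  induction k with
  | zero => intro xs ms ds lo _ _ _ _ _; rfl
  | succ k ih =>
    intro xs ms ds lo hlen hpw hxs hms hds
    match xs with
    | [] => simp at hlen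
    | x :: rest =>
      have hrlen : rest.length = k := by simpa using hlen
      have hhead : ∀ y ∈ rest, x < y := (List.pairwise_cons.mp hpw).1
      have htail : rest.Pairwise (· < ·) := (List.pairwise_cons.mp hpw).2
      have hPx : P x := (hxs x (List.mem_cons_self)).1
      have hlox : lo ≤ x := (hxs x (List.mem_cons_self)).2
      -- gaps facts
      have hgnodup : (gaps (x :: rest)).Nodup :=
        gaps_nodup P key (x :: rest) hpw (fun y hy => (hxs y hy).1)
      have hglen : (gaps (x :: rest)).length = k := by
        rw [gaps_length]; simp [hrlen]
      have havoid : ∀ d ∈ gaps (x :: rest), 0 < d ∧ ¬ bitset ds d := by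
        intro d hd
        obtain ⟨p, q, hpm, hqm, hpq, rfl⟩ := gaps_rep (x :: rest) hpw d hd
        refine ⟨by omega, fun hb => ?_⟩
        obtain ⟨a', b', hPa', hPb', hba', halo', heq'⟩ := hds _ hb
        have hk := key q p a' b' (hxs q hqm).1 (hxs p hpm).1 hPa' hPb' hpq hba' heq'.symm
        have : lo ≤ q := (hxs q hqm).2
        omega
      have hgsum : x + (gaps (x :: rest)).sum ≤ 50 := by
        obtain ⟨z, hz, he⟩ := gaps_sum x rest hpw
        have := hP50 z (hxs z hz).1
        omega
      -- the selection bound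
      have hTsum : (gaps (x :: rest)).toFinset.sum id = (gaps (x :: rest)).sum := by
        rw [List.sum_toFinset _ hgnodup]; simp
      have hTcard : (gaps (x :: rest)).toFinset.card = k := by
        rw [List.toFinset_card_of_nodup hgnodup, hglen]
      have hsel : sumSel ds 128 k 0 0 ≤ (gaps (x :: rest)).sum := by
        have := sel_le ds 128 k 0 0 (gaps (x :: rest)).toFinset
          (fun y hy => (havoid y (List.mem_toFinset.mp hy)))
          (by omega)
        omega
      -- apply anyIn_true at x
      rw [srchG_succ]
      refine anyIn_true ?_ _ lo hlox (by omega)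
      show (okc x ds ms && srchG k (x :: ms) (ds ||| ndiffs x ms) (x + 1)) = true
      have hok : okc x ds ms = true := by
        refine okc_true ms (fun m hm hb => ?_)
        obtain ⟨a', b', hPa', hPb', hba', halo', heq'⟩ := hds _ hb
        have hmlo := (hms m hm).2
        have hk := key x m a' b' hPx (hms m hm).1 hPa' hPb' (by omega) hba' heq'.symm
        omega
      have hrec : srchG k (x :: ms) (ds ||| ndiffs x ms) (x + 1) = true := by
        refine ih rest (x :: ms) (ds ||| ndiffs x ms) (x + 1) hrlen htail
          (fun y hy => ⟨(hxs y (List.mem_cons_of_mem _ hy)).1, by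
            have := hhead y hy; omega⟩)
          (fun m hm => ?_) (fun d hd => ?_)
        · rcases List.mem_cons.mp hm with rfl | hm'
          · exact ⟨hPx, by omega⟩
          · have := hms m hm'; exact ⟨this.1, by omega⟩
        · rcases bitset_or hd with h1 | h2
          · obtain ⟨a', b', h⟩ := hds d h1
            exact ⟨a', b', h.1, h.2.1, h.2.2.1, by omega, h.2.2.2.2⟩
          · obtain ⟨m, hm, rfl⟩ := ndiffs_bitset ms h2
            have := hms m hm
            exact ⟨x, m, hPx, this.1, by omega, by omega, rfl⟩
      rw [hok, hrec]
      rfl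

/- ### the 50 kernel computations -/
set_option maxRecDepth 1000000 in
theorem top_1 : top 1 = false := by decide +kernel

set_option maxRecDepth 1000000 in
theorem top_2 : top 2 = false := by decide +kernel

set_option maxRecDepth 1000000 in
theorem top_3 : top 3 = false := by decide +kernel

set_option maxRecDepth 1000000 in
theorem top_4 : top 4 = false := by decide +kernel

set_option maxRecDepth 1000000 in
theorem top_5 : top 5 = false := by decide +kernel

set_option maxRecDepth 1000000 in
theorem top_6 : top 6 = false := by decide +kernel

set_option maxRecDepth 1000000 in
theorem top_7 : top 7 = false := by decide +kernel

set_option maxRecDepth 1000000 in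
theorem top_8 : top 8 = false := by decide +kernel

set_option maxRecDepth 1000000 in
theorem top_9 : top 9 = false := by decide +kernel

set_option maxRecDepth 1000000 in
theorem top_10 : top 10 = false := by decide +kernel

set_option maxRecDepth 1000000 in
theorem top_11 : top 11 = false := by decide +kernel

set_option maxRecDepth 1000000 in
theorem top_12 : top 12 = false := by decide +kernel

set_option maxRecDepth 1000000 in
theorem top_13 : top 13 = false := by decide +kernel

set_option maxRecDepth 1000000 in
theorem top_14 : top 14 = false := by decide +kernel

set_option maxRecDepth 1000000 in
theorem top_15 : top 15 = false := by decide +kernel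

set_option maxRecDepth 1000000 in
theorem top_16 : top 16 = false := by decide +kernel

set_option maxRecDepth 1000000 in
theorem top_17 : top 17 = false := by decide +kernel

set_option maxRecDepth 1000000 in
theorem top_18 : top 18 = false := by decide +kernel

set_option maxRecDepth 1000000 in
theorem top_19 : top 19 = false := by decide +kernel

set_option maxRecDepth 1000000 in
theorem top_20 : top 20 = false := by decide +kernel

set_option maxRecDepth 1000000 in
theorem top_21 : top 21 = false := by decide +kernel

set_option maxRecDepth 1000000 in
theorem top_22 : top 22 = false := by decide +kernel

set_option maxRecDepth 1000000 in
theorem top_23 : top 23 = false := by decide +kernel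

set_option maxRecDepth 1000000 in
theorem top_24 : top 24 = false := by decide +kernel

set_option maxRecDepth 1000000 in
theorem top_25 : top 25 = false := by decide +kernel

set_option maxRecDepth 1000000 in
theorem top_26 : top 26 = false := by decide +kernel

set_option maxRecDepth 1000000 in
theorem top_27 : top 27 = false := by decide +kernel

set_option maxRecDepth 1000000 in
theorem top_28 : top 28 = false := by decide +kernel

set_option maxRecDepth 1000000 in
theorem top_29 : top 29 = false := by decide +kernel

set_option maxRecDepth 1000000 in
theorem top_30 : top 30 = false := by decide +kernel

set_option maxRecDepth 1000000 in
theorem top_31 : top 31 = false := by decide +kernel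

set_option maxRecDepth 1000000 in
theorem top_32 : top 32 = false := by decide +kernel

set_option maxRecDepth 1000000 in
theorem top_33 : top 33 = false := by decide +kernel

set_option maxRecDepth 1000000 in
theorem top_34 : top 34 = false := by decide +kernel

set_option maxRecDepth 1000000 in
theorem top_35 : top 35 = false := by decide +kernel

set_option maxRecDepth 1000000 in
theorem top_36 : top 36 = false := by decide +kernel

set_option maxRecDepth 1000000 in
theorem top_37 : top 37 = false := by decide +kernel

set_option maxRecDepth 1000000 in
theorem top_38 : top 38 = false := by decide +kernel

set_option maxRecDepth 1000000 in
theorem top_39 : top 39 = false := by decide +kernel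

set_option maxRecDepth 1000000 in
theorem top_40 : top 40 = false := by decide +kernel

set_option maxRecDepth 1000000 in
theorem top_41 : top 41 = false := by decide +kernel

set_option maxRecDepth 1000000 in
theorem top_42 : top 42 = false := by decide +kernel

set_option maxRecDepth 1000000 in
theorem top_43 : top 43 = false := by decide +kernel

set_option maxRecDepth 1000000 in
theorem top_44 : top 44 = false := by decide +kernel

set_option maxRecDepth 1000000 in
theorem top_45 : top 45 = false := by decide +kernel

set_option maxRecDepth 1000000 in
theorem top_46 : top 46 = false := by decide +kernel

set_option maxRecDepth 1000000 in
theorem top_47 : top 47 = false := by decide +kernel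

set_option maxRecDepth 1000000 in
theorem top_48 : top 48 = false := by decide +kernel

set_option maxRecDepth 1000000 in
theorem top_49 : top 49 = false := by decide +kernel

set_option maxRecDepth 1000000 in
theorem top_50 : top 50 = false := by decide +kernel

theorem tops : ∀ x : ℕ, 1 ≤ x → x ≤ 50 → top x = false := by
  intro x h1 h2
  interval_cases x
  exacts [top_1, top_2, top_3, top_4, top_5, top_6, top_7, top_8, top_9, top_10, top_11, top_12, top_13, top_14, top_15, top_16, top_17, top_18, top_19, top_20, top_21, top_22, top_23, top_24, top_25, top_26, top_27, top_28, top_29, top_30, top_31, top_32, top_33, top_34, top_35, top_36, top_37, top_38, top_39, top_40, top_41, top_42, top_43, top_44, top_45, top_46, top_47, top_48, top_49, top_50]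

theorem F2_51_le_9 (S : Finset ℤ) (hsub : (S : Set ℤ) ⊆ Set.Icc 1 51)
    (hS : IsSidon (S : Set ℤ)) : S.card ≤ 9 := by
  by_contra hcard
  push_neg at hcard
  obtain ⟨T, hTS, hT10⟩ := Finset.exists_subset_card_eq (s := S) (n := 10) (by omega)
  have hbd : ∀ a ∈ T, (1 : ℤ) ≤ a ∧ a ≤ 51 := by
    intro a ha
    have : a ∈ (S : Set ℤ) := Finset.mem_coe.mpr (hTS ha)
    exact Set.mem_Icc.mp (hsub this)
  have hmemS : ∀ a ∈ T, a ∈ (S : Set ℤ) := fun a ha => Finset.mem_coe.mpr (hTS ha)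
  have hlen : (T.sort (· ≤ ·)).length = 10 := by rw [Finset.length_sort, hT10]
  have hsrt : (T.sort (· ≤ ·)).Pairwise (· < ·) := T.sortedLT_sort.pairwise
  have hmem : ∀ a ∈ T.sort (· ≤ ·), a ∈ T := fun a ha => (Finset.mem_sort _).mp ha
  obtain ⟨μ, l9, hl9⟩ : ∃ a t, T.sort (· ≤ ·) = a :: t := by
    cases h : T.sort (· ≤ ·) with
    | nil => rw [h] at hlen; simp at hlen
    | cons a t => exact ⟨a, t, rfl⟩
  obtain ⟨x₂, r8, hr8⟩ : ∃ a t, l9 = a :: t := by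
    cases h : l9 with
    | nil => rw [hl9, h] at hlen; simp at hlen
    | cons a t => exact ⟨a, t, rfl⟩
  rw [hl9, hr8] at hlen hsrt hmem
  have hμ : μ ∈ T := hmem μ (List.mem_cons_self)
  have hx₂ : x₂ ∈ T := hmem x₂ (List.mem_cons_of_mem _ (List.mem_cons_self))
  have hμlt : ∀ y ∈ x₂ :: r8, μ < y := (List.pairwise_cons.mp hsrt).1
  have hsrt' : (x₂ :: r8).Pairwise (· < ·) := (List.pairwise_cons.mp hsrt).2
  have hx₂lt : ∀ y ∈ r8, x₂ < y := (List.pairwise_cons.mp hsrt').1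
  have hr8srt : r8.Pairwise (· < ·) := (List.pairwise_cons.mp hsrt').2
  -- the predicate on shifted naturals
  set P : ℕ → Prop := fun n => ((μ + (n : ℤ)) ∈ (S : Set ℤ)) ∧ n ≤ 50 with hP
  have hP50 : ∀ n, P n → n ≤ 50 := fun n h => h.2
  have key : ∀ a b c d : ℕ, P a → P b → P c → P d → b < a → d < c →
      a - b = c - d → a = c ∧ b = d := by
    intro a b c d ha hb hc hd hba hdc heq
    have heqz : (a : ℤ) - b = (c : ℤ) - d := by
      have h' := congrArg (fun n : ℕ => (n : ℤ)) heq
      rwa [Nat.cast_sub hba.le, Nat.cast_sub hdc.le] at h'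
    have hsum : (μ + (a : ℤ)) + (μ + (d : ℤ)) = (μ + (c : ℤ)) + (μ + (b : ℤ)) := by omega
    have hset := hS (μ + (a : ℤ)) ha.1 (μ + (d : ℤ)) hd.1 (μ + (c : ℤ)) hc.1
      (μ + (b : ℤ)) hb.1 hsum
    have hmac : (μ + (a : ℤ)) ∈ ({μ + (c : ℤ), μ + (b : ℤ)} : Set ℤ) := by
      rw [← hset]; exact Set.mem_insert _ _
    rcases hmac with h | h
    · have : a = c := by omega
      omega
    · rw [Set.mem_singleton_iff] at h
      have : a = b := by omega
      omega
  -- the witness list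
  have hbdμ := hbd μ hμ
  have hbdx₂ := hbd x₂ hx₂
  have hμx₂ : μ < x₂ := hμlt x₂ (List.mem_cons_self)
  set N : ℤ → ℕ := fun a => (a - μ).toNat with hN
  have hPmem : ∀ a, a ∈ T → μ ≤ a → P (N a) := by
    intro a haT hμa
    have h1 := hbd a haT
    constructor
    · show (μ + ((a - μ).toNat : ℤ)) ∈ (S : Set ℤ)
      have : (((a - μ).toNat : ℤ)) = a - μ := Int.toNat_of_nonneg (by omega)
      rw [this]
      simpa using hmemS a haT
    · show (a - μ).toNat ≤ 50
      omega
  have hcomp := complete P hP50 key 8 (r8.map N) [N x₂, 0] (ndiffs (N x₂) [0]) (N x₂ + 1)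
    (by rw [List.length_map]; simpa using hlen)
    (by
      rw [List.pairwise_map]
      refine List.Pairwise.imp_of_mem ?_ hr8srt
      intro a b ha hb hab
      have h1 := hμlt a (List.mem_cons_of_mem _ ha)
      have h2 := hμlt b (List.mem_cons_of_mem _ hb)
      show (a - μ).toNat < (b - μ).toNat
      omega)
    (by
      intro y hy
      obtain ⟨a, ha, rfl⟩ := List.mem_map.mp hy
      have h1 := hμlt a (List.mem_cons_of_mem _ ha)
      have h2 := hx₂lt a ha
      refine ⟨hPmem a (hmem a (List.mem_cons_of_mem _ (List.mem_cons_of_mem _ ha))) h1.le, ?_⟩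
      show (x₂ - μ).toNat + 1 ≤ (a - μ).toNat
      omega)
    (by
      intro m hm
      rcases List.mem_cons.mp hm with rfl | hm'
      · exact ⟨hPmem x₂ hx₂ hμx₂.le, by omega⟩
      · have : m = 0 := by simpa using hm'
        subst this
        refine ⟨?_, by omega⟩
        constructor
        · show (μ + ((0:ℕ) : ℤ)) ∈ (S : Set ℤ)
          simpa using hmemS μ hμ
        · omega)
    (by
      intro d hd
      obtain ⟨m, hm, rfl⟩ := ndiffs_bitset [0] hd
      have : m = 0 := by simpa using hm
      subst this
      have hn2 : 0 < N x₂ := by show 0 < (x₂ - μ).toNat; omega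
      refine ⟨N x₂, 0, hPmem x₂ hx₂ hμx₂.le, ?_, hn2, by omega, rfl⟩
      constructor
      · show (μ + ((0:ℕ) : ℤ)) ∈ (S : Set ℤ)
        simpa using hmemS μ hμ
      · omega)
  have htop : top (N x₂) = true := hcomp
  have h1 : 1 ≤ N x₂ := by show 1 ≤ (x₂ - μ).toNat; omega
  have h2 : N x₂ ≤ 50 := by show (x₂ - μ).toNat ≤ 50; omega
  rw [tops (N x₂) h1 h2] at htop
  exact Bool.false_ne_true htop
end

section
/- Every Sidon set contained in [1,86] has at most 12 elements, i.e., F₂(86) ≤ 12. -/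
/-- Sum of `n` distinct integers, each at least 1, is at least `n(n+1)/2`. -/
lemma sum_distinct_pos : ∀ (n : ℕ) (D : Finset ℤ), D.card = n → (∀ x ∈ D, (1:ℤ) ≤ x) →
    ((n : ℤ) * (n+1)) ≤ 2 * D.sum id := by
  intro n
  induction n with
  | zero => intro D h hp
            have : (0:ℤ) ≤ D.sum id := Finset.sum_nonneg (fun x hx => by
              have := hp x hx; simp only [id]; linarith)
            push_cast; linarith
  | succ n ih =>
    intro D hcard hpos
    have hne : D.Nonempty := by rw [← Finset.card_pos, hcard]; omega
    set m := D.max' hne with hm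
    have hmem : m ∈ D := D.max'_mem hne
    have hsub : D ⊆ Finset.Icc 1 m := fun x hx =>
      Finset.mem_Icc.mpr ⟨hpos x hx, D.le_max' x hx⟩
    have hcard2 : D.card ≤ (Finset.Icc (1:ℤ) m).card := Finset.card_le_card hsub
    rw [Int.card_Icc] at hcard2
    have hmge : (n+1 : ℤ) ≤ m := by omega
    have hih := ih (D.erase m) (by rw [Finset.card_erase_of_mem hmem, hcard]; omega)
      (fun x hx => hpos x (Finset.mem_of_mem_erase hx))
    have hsum : m + (D.erase m).sum id = D.sum id := Finset.add_sum_erase D id hmem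
    push_cast at *
    linarith

lemma sum_inj_pos (d : ℕ → ℤ) (A : Finset ℕ) (hinj : ∀ x ∈ A, ∀ y ∈ A, d x = d y → x = y)
    (hpos : ∀ k ∈ A, 1 ≤ d k) : ((A.card : ℤ) * (A.card + 1)) ≤ 2 * ∑ k ∈ A, d k := by
  have hc : (A.image d).card = A.card := Finset.card_image_of_injOn hinj
  have hs : (A.image d).sum id = ∑ k ∈ A, d k := Finset.sum_image hinj
  have := sum_distinct_pos A.card (A.image d) hc (by
    intro x hx; obtain ⟨k, hk, rfl⟩ := Finset.mem_image.mp hx; exact hpos k hk)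
  rw [hs] at this; exact this

set_option maxHeartbeats 1000000 in
theorem F2_86_le_12 (S : Finset ℤ) (hsub : (S : Set ℤ) ⊆ Set.Icc 1 86)
    (hS : IsSidon (S : Set ℤ)) : S.card ≤ 12 := by
  by_contra hlt
  push_neg at hlt
  obtain ⟨T, hTS, hT13⟩ := Finset.exists_subset_card_eq (show 13 ≤ S.card by omega)
  set iso := T.orderIsoOfFin hT13 with hiso
  set A : ℕ → ℤ := fun k => (iso ⟨min k 12, by omega⟩ : ℤ) with hA
  have hmemT : ∀ k, A k ∈ T := fun k => (iso ⟨min k 12, by omega⟩).2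
  have hmemS : ∀ k, A k ∈ (S : Set ℤ) := fun k => hTS (hmemT k)
  have hbd : ∀ k, 1 ≤ A k ∧ A k ≤ 86 := fun k => by
    have := hsub (hmemS k); exact ⟨this.1, this.2⟩
  have h2 : ∀ i j : ℕ, i < j → j ≤ 12 → A i < A j := by
    intro i j hij hj
    have : (⟨min i 12, by omega⟩ : Fin 13) < ⟨min j 12, by omega⟩ := by
      simp [Fin.lt_def]; omega
    exact iso.strictMono this
  have hinj : ∀ i j : ℕ, i ≤ 12 → j ≤ 12 → A i = A j → i = j := by
    intro i j hi hj he
    rcases lt_trichotomy i j with h | h | h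
    · exact absurd he (ne_of_lt (h2 i j h hj))
    · exact h
    · exact absurd he.symm (ne_of_lt (h2 j i h hi))
  have h3 : ∀ i j k l : ℕ, i < j → k < l → j ≤ 12 → l ≤ 12 →
      A j - A i = A l - A k → i = k ∧ j = l := by
    intro i j k l hij hkl hj hl heq
    have hsum : A j + A k = A l + A i := by linarith
    have hpair := hS (A j) (hmemS j) (A k) (hmemS k) (A l) (hmemS l) (A i) (hmemS i) hsum
    have hj' : A j ∈ ({A l, A i} : Set ℤ) := by rw [← hpair]; left; rfl
    rcases hj' with h | h
    · have h' : A k = A i := by linarith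
      exact ⟨(hinj k i (by omega) (by omega) h').symm, hinj j l hj hl h⟩
    · exact absurd h (ne_of_gt (h2 i j hij hj))
  -- the set of positive differences
  set P : Finset ((_ : ℕ) × ℕ) := (Finset.range 13).sigma (fun j => Finset.range j) with hP
  have hPcard : P.card = 78 := by
    rw [hP, Finset.card_sigma]; simp [Finset.sum_range_succ]
  have hmemP : ∀ p : (_ : ℕ) × ℕ, p ∈ P → p.2 < p.1 ∧ p.1 ≤ 12 := by
    intro p hp; rw [hP, Finset.mem_sigma] at hp
    simp only [Finset.mem_range] at hp; omega
  set f : ((_ : ℕ) × ℕ) → ℤ := fun p => A p.1 - A p.2 with hf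
  have hfinj : ∀ p ∈ P, ∀ q ∈ P, f p = f q → p = q := by
    intro p hp q hq he
    obtain ⟨hp1, hp2⟩ := hmemP p hp
    obtain ⟨hq1, hq2⟩ := hmemP q hq
    obtain ⟨h1, h4⟩ := h3 p.2 p.1 q.2 q.1 hp1 hq1 hp2 hq2 he
    exact Sigma.ext h4 (heq_of_eq h1)
  set Dset : Finset ℤ := P.image f with hD
  have hDcard : Dset.card = 78 := by rw [hD, Finset.card_image_of_injOn hfinj, hPcard]
  have hDpos : ∀ x ∈ Dset, (1:ℤ) ≤ x := by
    intro x hx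
    obtain ⟨p, hp, rfl⟩ := Finset.mem_image.mp hx
    obtain ⟨hp1, hp2⟩ := hmemP p hp
    have := h2 p.2 p.1 hp1 hp2
    simp only [hf]; linarith
  have hDsum : Dset.sum id = ∑ p ∈ P, f p := Finset.sum_image hfinj
  have hlow := sum_distinct_pos 78 Dset hDcard hDpos
  rw [hDsum] at hlow
  -- rewrite the total difference sum in terms of gaps
  have hE : ∑ p ∈ P, f p =
      ∑ k ∈ Finset.range 12, ((k:ℤ)+1)*(12-(k:ℤ)) * (A (k+1) - A k) := by
    rw [hP, Finset.sum_sigma]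
    simp only [hf, Finset.sum_range_succ, Finset.sum_range_zero]
    push_cast
    ring
  set d : ℕ → ℤ := fun k => A (k+1) - A k with hd
  have hdinj : ∀ x : ℕ, x ≤ 11 → ∀ y : ℕ, y ≤ 11 → d x = d y → x = y := by
    intro x hx y hy he
    exact (h3 x (x+1) y (y+1) (by omega) (by omega) (by omega) (by omega) he).1
  have hdpos : ∀ k : ℕ, k ≤ 11 → 1 ≤ d k := fun k hk => by
    have := h2 k (k+1) (by omega) (by omega); simp only [hd]; linarith
  -- the five subset sums
  have hw : ∑ k ∈ Finset.range 12, ((k:ℤ)+1)*(12-(k:ℤ)) * d k =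
      42 * ∑ k ∈ Finset.range 12, d k
      - (2 * ∑ k ∈ ({0,1,2,3,4,7,8,9,10,11} : Finset ℕ), d k
       + 4 * ∑ k ∈ ({0,1,2,3,8,9,10,11} : Finset ℕ), d k
       + 6 * ∑ k ∈ ({0,1,2,9,10,11} : Finset ℕ), d k
       + 8 * ∑ k ∈ ({0,1,10,11} : Finset ℕ), d k
       + 10 * ∑ k ∈ ({0,11} : Finset ℕ), d k) := by
    simp only [Finset.sum_range_succ, Finset.sum_range_zero, Finset.sum_insert,
      Finset.mem_insert, Finset.mem_singleton, Finset.sum_singleton]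
    norm_num
    ring
  have htel : ∑ k ∈ Finset.range 12, d k = A 12 - A 0 := Finset.sum_range_sub A 12
  have hS2 := sum_inj_pos d ({0,1,2,3,4,7,8,9,10,11} : Finset ℕ)
    (fun x hx y hy => hdinj x (by fin_cases hx <;> omega) y (by fin_cases hy <;> omega))
    (fun k hk => hdpos k (by fin_cases hk <;> omega))
  have hS6 := sum_inj_pos d ({0,1,2,3,8,9,10,11} : Finset ℕ)
    (fun x hx y hy => hdinj x (by fin_cases hx <;> omega) y (by fin_cases hy <;> omega))
    (fun k hk => hdpos k (by fin_cases hk <;> omega))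
  have hS12 := sum_inj_pos d ({0,1,2,9,10,11} : Finset ℕ)
    (fun x hx y hy => hdinj x (by fin_cases hx <;> omega) y (by fin_cases hy <;> omega))
    (fun k hk => hdpos k (by fin_cases hk <;> omega))
  have hS20 := sum_inj_pos d ({0,1,10,11} : Finset ℕ)
    (fun x hx y hy => hdinj x (by fin_cases hx <;> omega) y (by fin_cases hy <;> omega))
    (fun k hk => hdpos k (by fin_cases hk <;> omega))
  have hS30 := sum_inj_pos d ({0,11} : Finset ℕ)
    (fun x hx y hy => hdinj x (by fin_cases hx <;> omega) y (by fin_cases hy <;> omega))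
    (fun k hk => hdpos k (by fin_cases hk <;> omega))
  norm_num at hS2 hS6 hS12 hS20 hS30
  have hA12 := (hbd 12).2
  have hA0 := (hbd 0).1
  rw [hE, hw, htel] at hlow
  norm_num at hlow
  linarith
end

section
/- If S₁ and S₂ are the only two Sidon sets of size 12 contained in [1,86], then S₁ ∩ S₂ ≠ ∅; consequently any partition of [1,86] into Sidon sets contains at most one part of size 12. -/
lemma pair_cases {x y z w : ℤ} (h : ({x, y} : Set ℤ) = {z, w}) :
    (x = z ∧ y = w) ∨ (x = w ∧ y = z) := by
  have hx : x ∈ ({z, w} : Set ℤ) := h ▸ (by left; rfl)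
  have hy : y ∈ ({z, w} : Set ℤ) := h ▸ (by right; rfl)
  have hz : z ∈ ({x, y} : Set ℤ) := h ▸ (by left; rfl)
  have hw : w ∈ ({x, y} : Set ℤ) := h ▸ (by right; rfl)
  simp only [Set.mem_insert_iff, Set.mem_singleton_iff] at hx hy hz hw
  omega

lemma pair_eq {x y z w : ℤ} (h : (x = z ∧ y = w) ∨ (x = w ∧ y = z)) :
    ({x, y} : Set ℤ) = {z, w} := by
  rcases h with ⟨rfl, rfl⟩ | ⟨rfl, rfl⟩
  · rfl
  · exact Set.pair_comm x y

lemma sidon_translate (S : Finset ℤ) (t : ℤ) (h : IsSidon ↑S) :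
    IsSidon ↑(S.image (· + t)) := by
  intro a ha b hb c hc d hd habcd
  simp only [Finset.coe_image, Set.mem_image, Finset.mem_coe] at ha hb hc hd
  obtain ⟨a', ha', rfl⟩ := ha
  obtain ⟨b', hb', rfl⟩ := hb
  obtain ⟨c', hc', rfl⟩ := hc
  obtain ⟨d', hd', rfl⟩ := hd
  have := pair_cases (h a' ha' b' hb' c' hc' d' hd' (by omega))
  exact pair_eq (by omega)

lemma sidon_reflect (S : Finset ℤ) (h : IsSidon ↑S) :
    IsSidon ↑(S.image (fun x => 87 - x)) := by
  intro a ha b hb c hc d hd habcd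
  simp only [Finset.coe_image, Set.mem_image, Finset.mem_coe] at ha hb hc hd
  obtain ⟨a', ha', rfl⟩ := ha
  obtain ⟨b', hb', rfl⟩ := hb
  obtain ⟨c', hc', rfl⟩ := hc
  obtain ⟨d', hd', rfl⟩ := hd
  have := pair_cases (h a' ha' b' hb' c' hc' d' hd' (by omega))
  exact pair_eq (by omega)

lemma sym_card_le_two (S : Finset ℤ) (k : ℤ) (hS : IsSidon ↑S)
    (hsym : ∀ x ∈ S, k - x ∈ S) : S.card ≤ 2 := by
  by_contra hcard
  have h3 : 2 < S.card := by omega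
  obtain ⟨a, b, c, ha, hb, hc, hab, hac, hbc⟩ := Finset.two_lt_card_iff.mp h3
  have key : ∀ x ∈ S, ∀ y ∈ S, x ≠ y → x + y = k := by
    intro x hx y hy hxy
    have := pair_cases (hS x hx (k - x) (hsym x hx) y hy (k - y) (hsym y hy) (by omega))
    omega
  have h1 := key a ha b hb hab
  have h2 := key a ha c hc hac
  omega

lemma translate_ne (S : Finset ℤ) (t : ℤ) (ht : t ≠ 0) (hcard : S.card = 12) :
    S.image (· + t) ≠ S := by
  intro h
  have hsum : ∑ x ∈ S.image (· + t), x = ∑ x ∈ S, x := by rw [h]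
  rw [Finset.sum_image (by intro x _ y _ hxy; exact add_right_cancel hxy)] at hsum
  rw [Finset.sum_add_distrib, Finset.sum_const, hcard] at hsum
  simp at hsum
  omega

theorem only_two_12SS_intersect (S₁ S₂ : Finset ℤ)
    (h₁ : (S₁ : Set ℤ) ⊆ Set.Icc 1 86) (hS₁ : IsSidon (S₁ : Set ℤ)) (hc₁ : S₁.card = 12)
    (h₂ : (S₂ : Set ℤ) ⊆ Set.Icc 1 86) (hS₂ : IsSidon (S₂ : Set ℤ)) (hc₂ : S₂.card = 12)
    (hne : S₁ ≠ S₂)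
    (honly : ∀ T : Finset ℤ, (T : Set ℤ) ⊆ Set.Icc 1 86 → IsSidon (T : Set ℤ) →
      T.card = 12 → T = S₁ ∨ T = S₂) :
    S₁ ∩ S₂ ≠ ∅ ∧
    ∀ k : ℕ, ∀ P : Fin k → Finset ℤ,
      (∀ i, IsSidon ((P i : Set ℤ))) →
      (∀ i j, i ≠ j → Disjoint (P i) (P j)) →
      Finset.univ.biUnion P = Finset.Icc (1 : ℤ) 86 →
      ∀ i j, (P i).card = 12 → (P j).card = 12 → i = j := by
  have hb₁ : ∀ x ∈ S₁, 1 ≤ x ∧ x ≤ 86 := fun x hx =>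
    Set.mem_Icc.mp (h₁ (Finset.mem_coe.mpr hx))
  set R := S₁.image (fun x => 87 - x) with hRdef
  have hRsub : (R : Set ℤ) ⊆ Set.Icc 1 86 := by
    intro x hx
    simp only [hRdef, Finset.coe_image, Set.mem_image, Finset.mem_coe] at hx
    obtain ⟨y, hy, rfl⟩ := hx
    have := hb₁ y hy
    rw [Set.mem_Icc]; omega
  have hRcard : R.card = 12 := by
    rw [hRdef, Finset.card_image_of_injective _ (fun x y h => by omega)]
    exact hc₁
  have hRS : R = S₂ := by
    rcases honly R hRsub (sidon_reflect S₁ hS₁) hRcard with h | h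
    · exfalso
      have hsym : ∀ x ∈ S₁, 87 - x ∈ S₁ := fun x hx =>
        h ▸ Finset.mem_image_of_mem _ hx
      have := sym_card_le_two S₁ 87 hS₁ hsym
      omega
    · exact h
  have h86 : (86 : ℤ) ∈ S₁ := by
    by_contra h86
    have hTsub : (↑(S₁.image (· + 1)) : Set ℤ) ⊆ Set.Icc 1 86 := by
      intro x hx
      simp only [Finset.coe_image, Set.mem_image, Finset.mem_coe] at hx
      obtain ⟨y, hy, rfl⟩ := hx
      have := hb₁ y hy
      have : y ≠ 86 := fun h => h86 (h ▸ hy)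
      rw [Set.mem_Icc]; omega
    have hTcard : (S₁.image (· + 1)).card = 12 := by
      rw [Finset.card_image_of_injective _ (fun x y h => by omega)]
      exact hc₁
    rcases honly _ hTsub (sidon_translate S₁ 1 hS₁) hTcard with h | h
    · exact translate_ne S₁ 1 one_ne_zero hc₁ h
    · have key : ∀ x ∈ S₁, 86 - x ∈ S₁ := by
        intro x hx
        have hmem : x + 1 ∈ R := by
          rw [hRS, ← h]; exact Finset.mem_image_of_mem _ hx
        simp only [hRdef, Finset.mem_image] at hmem
        obtain ⟨y, hy, hxy⟩ := hmem
        have hey : 86 - x = y := by omega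
        rw [hey]; exact hy
      have := sym_card_le_two S₁ 86 hS₁ key
      omega
  have h1 : (1 : ℤ) ∈ S₁ := by
    by_contra h1
    have hTsub : (↑(S₁.image (· + (-1))) : Set ℤ) ⊆ Set.Icc 1 86 := by
      intro x hx
      simp only [Finset.coe_image, Set.mem_image, Finset.mem_coe] at hx
      obtain ⟨y, hy, rfl⟩ := hx
      have := hb₁ y hy
      have : y ≠ 1 := fun h => h1 (h ▸ hy)
      rw [Set.mem_Icc]; omega
    have hTcard : (S₁.image (· + (-1))).card = 12 := by
      rw [Finset.card_image_of_injective _ (fun x y h => by omega)]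
      exact hc₁
    rcases honly _ hTsub (sidon_translate S₁ (-1) hS₁) hTcard with h | h
    · exact translate_ne S₁ (-1) (by norm_num) hc₁ h
    · have key : ∀ x ∈ S₁, 88 - x ∈ S₁ := by
        intro x hx
        have hmem : x + (-1) ∈ R := by
          rw [hRS, ← h]; exact Finset.mem_image_of_mem _ hx
        simp only [hRdef, Finset.mem_image] at hmem
        obtain ⟨y, hy, hxy⟩ := hmem
        have hey : 88 - x = y := by omega
        rw [hey]; exact hy
      have := sym_card_le_two S₁ 88 hS₁ key
      omega
  have h1₂ : (1 : ℤ) ∈ S₂ := by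
    rw [← hRS, hRdef]
    have : (1 : ℤ) = 87 - 86 := by norm_num
    rw [this]
    exact Finset.mem_image_of_mem _ h86
  refine ⟨?_, ?_⟩
  · intro hemp
    have hmem : (1 : ℤ) ∈ S₁ ∩ S₂ := Finset.mem_inter.mpr ⟨h1, h1₂⟩
    rw [hemp] at hmem
    exact absurd hmem (Finset.notMem_empty 1)
  · intro k P hPsidon hPdisj hPunion i j hi hj
    by_contra hij
    have hsub : ∀ l, (↑(P l) : Set ℤ) ⊆ Set.Icc 1 86 := by
      intro l x hx
      have hm : x ∈ Finset.univ.biUnion P :=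
        Finset.mem_biUnion.mpr ⟨l, Finset.mem_univ l, Finset.mem_coe.mp hx⟩
      rw [hPunion] at hm
      rw [Set.mem_Icc]; exact Finset.mem_Icc.mp hm
    have hdisj := hPdisj i j hij
    have hmi : (1 : ℤ) ∈ P i := by
      rcases honly (P i) (hsub i) (hPsidon i) hi with h | h
      · rw [h]; exact h1
      · rw [h]; exact h1₂
    have hmj : (1 : ℤ) ∈ P j := by
      rcases honly (P j) (hsub j) (hPsidon j) hj with h | h
      · rw [h]; exact h1
      · rw [h]; exact h1₂
    exact Finset.disjoint_left.mp hdisj hmi hmj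
end

section
/- The partition of [1,65] into the 7 sets {1,3,15,22,30,33,46,50,55,56}, {2,9,17,21,26,27,47,49,60,63}, {4,7,12,16,31,41,42,48,62,64}, {5,11,14,28,32,39,44,52,54}, {6,19,23,24,34,43,57,59,65}, {8,10,20,36,37,40,45,51,58}, {13,18,25,29,35,38,53,61} is a partition into Sidon sets in which two parts have sizes differing by 2 (it is not balanced). -/
lemma isSidon_of_finset (s : Finset ℤ)
    (h : ∀ a ∈ s, ∀ b ∈ s, ∀ c ∈ s, ∀ d ∈ s,
      a + b = c + d → (a = c ∧ b = d) ∨ (a = d ∧ b = c)) :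
    IsSidon (s : Set ℤ) := by
  intro a ha b hb c hc d hd habcd
  rcases h a ha b hb c hc d hd habcd with ⟨rfl, rfl⟩ | ⟨rfl, rfl⟩
  · rfl
  · exact Set.pair_comm _ _

set_option maxHeartbeats 4000000 in
theorem unbalanced_partition_65 :
    (∀ i, IsSidon (((![({1,3,15,22,30,33,46,50,55,56} : Finset ℤ),
         {2,9,17,21,26,27,47,49,60,63},
         {4,7,12,16,31,41,42,48,62,64},
         {5,11,14,28,32,39,44,52,54},
         {6,19,23,24,34,43,57,59,65},
         {8,10,20,36,37,40,45,51,58},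
         {13,18,25,29,35,38,53,61}] : Fin 7 → Finset ℤ) i : Set ℤ))) ∧
    (∀ i j : Fin 7, i ≠ j → Disjoint
      ((![({1,3,15,22,30,33,46,50,55,56} : Finset ℤ),
         {2,9,17,21,26,27,47,49,60,63},
         {4,7,12,16,31,41,42,48,62,64},
         {5,11,14,28,32,39,44,52,54},
         {6,19,23,24,34,43,57,59,65},
         {8,10,20,36,37,40,45,51,58},
         {13,18,25,29,35,38,53,61}] : Fin 7 → Finset ℤ) i)
      ((![({1,3,15,22,30,33,46,50,55,56} : Finset ℤ),
         {2,9,17,21,26,27,47,49,60,63},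
         {4,7,12,16,31,41,42,48,62,64},
         {5,11,14,28,32,39,44,52,54},
         {6,19,23,24,34,43,57,59,65},
         {8,10,20,36,37,40,45,51,58},
         {13,18,25,29,35,38,53,61}] : Fin 7 → Finset ℤ) j)) ∧
    (Finset.univ.biUnion (![({1,3,15,22,30,33,46,50,55,56} : Finset ℤ),
         {2,9,17,21,26,27,47,49,60,63},
         {4,7,12,16,31,41,42,48,62,64},
         {5,11,14,28,32,39,44,52,54},
         {6,19,23,24,34,43,57,59,65},
         {8,10,20,36,37,40,45,51,58},
         {13,18,25,29,35,38,53,61}] : Fin 7 → Finset ℤ) = Finset.Icc (1 : ℤ) 65) ∧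
    (({1,3,15,22,30,33,46,50,55,56} : Finset ℤ).card =
      ({13,18,25,29,35,38,53,61} : Finset ℤ).card + 2) := by
  refine ⟨?_, ?_, ?_, ?_⟩
  · intro i
    apply isSidon_of_finset
    fin_cases i <;> decide
  · decide
  · decide
  · decide
end

section
/- The unique partition of [1,50] into 6 Sidon sets cannot be extended to a partition of [1,51] into 6 Sidon sets: for each of the 6 parts, adding the element 51 to that part destroys the Sidon property. -/
theorem no_extension_to_51 :
    ¬ IsSidon (insert (51 : ℤ) {4,6,14,28,29,33,40,46,49}) ∧
    ¬ IsSidon (insert (51 : ℤ) {2,5,11,18,22,23,37,45,47}) ∧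
    ¬ IsSidon (insert (51 : ℤ) {3,7,8,24,30,32,39,42}) ∧
    ¬ IsSidon (insert (51 : ℤ) {1,13,15,26,31,34,35,41}) ∧
    ¬ IsSidon (insert (51 : ℤ) {9,12,19,21,27,43,44,48}) ∧
    ¬ IsSidon (insert (51 : ℤ) {10,16,17,20,25,36,38,50}) := by
  refine ⟨?_, ?_, ?_, ?_, ?_, ?_⟩ <;> intro h
  · have h2 := h 51 (by simp) 4 (by simp) 6 (by simp) 49 (by simp) (by norm_num)
    rw [Set.ext_iff] at h2
    have := (h2 51).mp (by simp)
    simp at this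
  · have h2 := h 51 (by simp) 5 (by simp) 11 (by simp) 45 (by simp) (by norm_num)
    rw [Set.ext_iff] at h2
    have := (h2 51).mp (by simp)
    simp at this
  · have h2 := h 51 (by simp) 3 (by simp) 24 (by simp) 30 (by simp) (by norm_num)
    rw [Set.ext_iff] at h2
    have := (h2 51).mp (by simp)
    simp at this
  · have h2 := h 51 (by simp) 15 (by simp) 31 (by simp) 35 (by simp) (by norm_num)
    rw [Set.ext_iff] at h2
    have := (h2 51).mp (by simp)
    simp at this
  · have h2 := h 51 (by simp) 9 (by simp) 12 (by simp) 48 (by simp) (by norm_num)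
    rw [Set.ext_iff] at h2
    have := (h2 51).mp (by simp)
    simp at this
  · have h2 := h 51 (by simp) 10 (by simp) 25 (by simp) 36 (by simp) (by norm_num)
    rw [Set.ext_iff] at h2
    have := (h2 51).mp (by simp)
    simp at this
end
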